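/- For every n, any tree on n vertices can be transformed into any other tree on n vertices by a finite sequence of Stretching and Expanding operations. -/

import Mathlib

open SimpleGraph Finset

/-- `G` embeds into `H` (a copy of `G` appears in `H`). -/
def graphEmbeds {V W : Type*} (G : SimpleGraph V) (H : SimpleGraph W) : Prop :=
  ∃ f : V → W, Function.Injective f ∧ ∀ u v, G.Adj u v → H.Adj (f u) (f v)

/-- `N` is large enough for the Ramsey property: every red/blue coloring of `K_N`
(the red graph `R`, blue graph `Rᶜ`) contains a red `G` or a blue `H`. -/
def isRamsey {V W : Type*} (G : SimpleGraph V) (H : SimpleGraph W) (N : ℕ) : Prop :=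
  ∀ R : SimpleGraph (Fin N), graphEmbeds G R ∨ graphEmbeds H Rᶜ

/-- The Ramsey number `R(G,H)`. -/
noncomputable def ramsey {V W : Type*} (G : SimpleGraph V) (H : SimpleGraph W) : ℕ :=
  sInf {N | isRamsey G H N}

/-- `t` disjoint copies of the complete graph `K_m`. -/
def kCliques (t m : ℕ) : SimpleGraph (Fin t × Fin m) where
  Adj x y := x.1 = y.1 ∧ x.2 ≠ y.2
  symm := ⟨fun x y h => ⟨h.1.symm, h.2.symm⟩⟩
  loopless := ⟨fun x h => h.2 rfl⟩

/-- The chromatic number as a natural number. -/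
noncomputable def chromNum {V : Type*} (G : SimpleGraph V) : ℕ := sInf {n | G.Colorable n}

/-- The chromatic surplus: the minimum size of a color class over all proper
colorings with `chromNum G` colors. -/
noncomputable def surplus {V : Type*} [Fintype V] (G : SimpleGraph V) : ℕ :=
  sInf {k | ∃ C : G.Coloring (Fin (chromNum G)), ∃ i : Fin (chromNum G),
    (Finset.univ.filter (fun v => C v = i)).card = k}

/-- `a` is a leaf of `G`: it has a unique neighbor. -/
def IsLeaf {V : Type*} (G : SimpleGraph V) (a : V) : Prop := ∃! w, G.Adj a w

/-- Stretching: delete a leaf `b` and attach a new vertex (reusing the label `b`)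
to the leaf `a`. -/
def isStretch {V : Type*} (T T' : SimpleGraph V) : Prop :=
  ∃ a b : V, a ≠ b ∧ IsLeaf T a ∧ IsLeaf T b ∧
    ∀ x y, T'.Adj x y ↔
      ((T.Adj x y ∧ x ≠ b ∧ y ≠ b) ∨ (x = b ∧ y = a) ∨ (x = a ∧ y = b))

/-- Expanding at a vertex `u` of degree `d` (`2 ≤ d ≤ n-2`) all of whose neighbors
are leaves except `z0`: delete a leaf `b` outside `N[u]` and attach a new vertex
(reusing the label `b`) to `u`. -/
def isExpand {V : Type*} [Fintype V] (T T' : SimpleGraph V) : Prop :=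
  ∃ u b z0 : V, T.Adj u z0 ∧ ¬ IsLeaf T z0 ∧
    (∀ z, T.Adj u z → z ≠ z0 → IsLeaf T z) ∧
    2 ≤ (T.neighborSet u).ncard ∧ (T.neighborSet u).ncard ≤ Fintype.card V - 2 ∧
    IsLeaf T b ∧ b ≠ u ∧ ¬ T.Adj u b ∧
    ∀ x y, T'.Adj x y ↔
      ((T.Adj x y ∧ x ≠ b ∧ y ≠ b) ∨ (x = b ∧ y = u) ∨ (x = u ∧ y = b))

/-- Disjoint union of `K_m` and `K_l`. -/
def kUnion (m l : ℕ) : SimpleGraph (Fin m ⊕ Fin l) where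
  Adj x y := x ≠ y ∧ ((x.isLeft ∧ y.isLeft) ∨ (x.isRight ∧ y.isRight))
  symm := ⟨fun x y h => ⟨h.1.symm, h.2.imp (fun p => ⟨p.2, p.1⟩) (fun p => ⟨p.2, p.1⟩)⟩⟩
  loopless := ⟨fun x h => h.1 rfl⟩

/-- Disjoint union of `k` graphs, each on `Fin n`. -/
def disjUnion {k n : ℕ} (Fs : Fin k → SimpleGraph (Fin n)) :
    SimpleGraph (Fin k × Fin n) where
  Adj x y := x.1 = y.1 ∧ (Fs x.1).Adj x.2 y.2
  symm := by
    constructor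
    rintro ⟨i, a⟩ ⟨j, b⟩ ⟨h1, h2⟩
    dsimp at h1 h2 ⊢
    subst h1
    exact ⟨rfl, h2.symm⟩
  loopless := by
    constructor
    rintro ⟨i, a⟩ ⟨h1, h2⟩
    exact (Fs i).loopless.irrefl a h2

/-- Disjoint union of graphs `Fs i` on `Fin (n i)`. -/
def sigmaUnion {r : ℕ} {n : Fin r → ℕ} (Fs : ∀ i, SimpleGraph (Fin (n i))) :
    SimpleGraph (Σ i, Fin (n i)) where
  Adj x y := ∃ (i : Fin r) (a b : Fin (n i)), x = ⟨i, a⟩ ∧ y = ⟨i, b⟩ ∧ (Fs i).Adj a b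
  symm := by
    constructor
    rintro x y ⟨i, a, b, hx, hy, h⟩
    exact ⟨i, b, a, hy, hx, h.symm⟩
  loopless := by
    constructor
    rintro x ⟨i, a, b, hx, hy, h⟩
    rw [hx] at hy
    obtain ⟨-, hab⟩ := (Sigma.mk.inj_iff).mp hy
    exact (Fs i).loopless.irrefl a (by cases eq_of_heq hab; exact h)

namespace Stmt7Aux

open SimpleGraph Walk

variable {V : Type*}

lemma leaf_eq {T : SimpleGraph V} {b x y : V} (hb : IsLeaf T b)
    (hx : T.Adj b x) (hy : T.Adj b y) : x = y := by
  obtain ⟨w, -, hw⟩ := hb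
  rw [hw x hx, hw y hy]

lemma not_isLeaf_of_two {T : SimpleGraph V} {x b1 b2 : V} (h1 : T.Adj x b1)
    (h2 : T.Adj x b2) (hne : b1 ≠ b2) : ¬ IsLeaf T x := by
  intro hx
  exact hne (leaf_eq hx h1 h2)

lemma exists_second_nbr {T : SimpleGraph V} {x v : V} (hx : ¬ IsLeaf T x)
    (hv : T.Adj x v) : ∃ z, T.Adj x z ∧ z ≠ v := by
  by_contra h
  push_neg at h
  exact hx ⟨v, hv, fun y hy => h y hy⟩

/-- The star centered at `u`. -/
def starG (u : V) : SimpleGraph V where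
  Adj x y := x ≠ y ∧ (x = u ∨ y = u)
  symm := ⟨fun x y h => ⟨h.1.symm, h.2.symm⟩⟩
  loopless := ⟨fun x h => h.1 rfl⟩

/-- Delete the leaf `b` and reattach it at `a`. -/
def moveLeaf (T : SimpleGraph V) (b a : V) : SimpleGraph V where
  Adj x y := x ≠ y ∧ ((T.Adj x y ∧ x ≠ b ∧ y ≠ b) ∨ (x = b ∧ y = a) ∨ (x = a ∧ y = b))
  symm := by
    constructor
    rintro x y ⟨h1, h2⟩
    refine ⟨h1.symm, ?_⟩
    rcases h2 with ⟨h, hx, hy⟩ | ⟨hx, hy⟩ | ⟨hx, hy⟩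
    · exact Or.inl ⟨h.symm, hy, hx⟩
    · exact Or.inr (Or.inr ⟨hy, hx⟩)
    · exact Or.inr (Or.inl ⟨hy, hx⟩)
  loopless := ⟨fun x h => h.1 rfl⟩

lemma moveLeaf_adj {T : SimpleGraph V} {b a : V} (x y : V) :
    (moveLeaf T b a).Adj x y ↔ x ≠ y ∧
      ((T.Adj x y ∧ x ≠ b ∧ y ≠ b) ∨ (x = b ∧ y = a) ∨ (x = a ∧ y = b)) := Iff.rfl

lemma moveLeaf_spec {T : SimpleGraph V} {b a : V} (hab : a ≠ b) (x y : V) :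
    (moveLeaf T b a).Adj x y ↔
      ((T.Adj x y ∧ x ≠ b ∧ y ≠ b) ∨ (x = b ∧ y = a) ∨ (x = a ∧ y = b)) := by
  rw [moveLeaf_adj]
  constructor
  · exact fun h => h.2
  · rintro (⟨h, hx, hy⟩ | ⟨rfl, rfl⟩ | ⟨rfl, rfl⟩)
    · exact ⟨h.ne, Or.inl ⟨h, hx, hy⟩⟩
    · exact ⟨fun h => hab h.symm, Or.inr (Or.inl ⟨rfl, rfl⟩)⟩
    · exact ⟨hab, Or.inr (Or.inr ⟨rfl, rfl⟩)⟩

lemma leaf_not_mem_support {T : SimpleGraph V} {b : V} (hb : IsLeaf T b) :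
    ∀ {x y : V} (p : T.Walk x y), p.IsPath → x ≠ b → y ≠ b → b ∉ p.support := by
  intro x y p
  induction p with
  | nil =>
    intro _ hx _ h
    rw [support_nil, List.mem_singleton] at h
    exact hx h.symm
  | @cons x v y h q ih =>
    intro hp hx hy hmem
    rw [support_cons] at hmem
    rcases List.mem_cons.mp hmem with hbx | hmem
    · exact hx hbx.symm
    · by_cases hv : v = b
      · subst hv
        obtain ⟨w, h2, q2, hq2⟩ := exists_eq_cons_of_ne (fun hvy => hy hvy.symm) q
        have hwx : w = x := leaf_eq hb h2 h.symm
        rw [cons_isPath_iff] at hp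
        apply hp.2
        rw [hq2, support_cons]
        exact List.mem_cons_of_mem _ (hwx ▸ q2.start_mem_support)
      · exact ih (hp.of_cons) hv hy hmem

lemma isPath_concat {G : SimpleGraph V} {u v w : V} {p : G.Walk u v} (hp : p.IsPath)
    (h : G.Adj v w) (hw : w ∉ p.support) : (p.concat h).IsPath := by
  rw [← isPath_reverse_iff, reverse_concat, cons_isPath_iff]
  refine ⟨hp.reverse, ?_⟩
  rwa [support_reverse, List.mem_reverse]

lemma moveLeaf_isTree {T : SimpleGraph V} {b a : V} (hT : T.IsTree)
    (hb : IsLeaf T b) (hab : a ≠ b) : (moveLeaf T b a).IsTree := by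
  classical
  have hconn := hT.isConnected
  have hadj_ab : (moveLeaf T b a).Adj a b := ⟨hab, Or.inr (Or.inr ⟨rfl, rfl⟩)⟩
  constructor
  · -- connected
    haveI : Nonempty V := hconn.nonempty
    refine Connected.mk ?_
    have key : ∀ x, (moveLeaf T b a).Reachable a x := by
      intro x
      by_cases hx : x = b
      · subst hx; exact hadj_ab.reachable
      · obtain ⟨w⟩ := hconn.preconnected a x
        have hbp : b ∉ w.toPath.1.support :=
          leaf_not_mem_support hb _ w.toPath.2 (fun h => hab h) hx
        have hedges : ∀ e ∈ (w.toPath.1).edges, e ∈ (moveLeaf T b a).edgeSet := by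
          intro e he
          induction e with
          | h c d =>
            have hcd := (w.toPath.1).adj_of_mem_edges he
            have hc : c ≠ b := fun h => hbp (h ▸ (w.toPath.1).fst_mem_support_of_mem_edges he)
            have hd : d ≠ b := fun h => hbp (h ▸ (w.toPath.1).snd_mem_support_of_mem_edges he)
            exact ⟨hcd.ne, Or.inl ⟨hcd, hc, hd⟩⟩
        exact ((w.toPath.1).transfer _ hedges).reachable
    intro x y
    exact (key x).symm.trans (key y)
  · -- acyclic
    intro v c hc
    by_cases hbc : b ∈ c.support
    · have hc' : (c.rotate b hbc).IsCycle := hc.rotate hbc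
      revert hc'
      generalize c.rotate b hbc = c'
      intro hc'
      cases c' with
      | nil => exact hc'.not_of_nil
      | @cons _ v2 _ h q =>
        have hv2 : v2 = a := by
          rcases h.2 with ⟨-, hbb, -⟩ | ⟨-, h2⟩ | ⟨h1, -⟩
          · exact absurd rfl hbb
          · exact h2
          · exact absurd h1.symm hab
        rw [cons_isCycle_iff] at hc'
        apply hc'.2
        obtain ⟨w2, h2, q2, hq2⟩ := exists_eq_cons_of_ne h.ne q.reverse
        have hw2 : w2 = v2 := by
          rcases h2.2 with ⟨-, hbb, -⟩ | ⟨-, h'⟩ | ⟨h', -⟩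
          · exact absurd rfl hbb
          · exact h'.trans hv2.symm
          · exact absurd h'.symm hab
        have hmm : s(b, w2) ∈ q.reverse.edges := by
          rw [hq2, edges_cons]; exact List.mem_cons_self
        rw [hw2] at hmm
        rwa [edges_reverse, List.mem_reverse] at hmm
    · have hedges : ∀ e ∈ c.edges, e ∈ T.edgeSet := by
        intro e he
        induction e with
        | h x y =>
          have hxy := c.adj_of_mem_edges he
          have hx : x ≠ b := fun h => hbc (h ▸ c.fst_mem_support_of_mem_edges he)
          have hy : y ≠ b := fun h => hbc (h ▸ c.snd_mem_support_of_mem_edges he)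
          rcases hxy.2 with ⟨h', -, -⟩ | ⟨h', -⟩ | ⟨-, h'⟩
          · exact h'
          · exact absurd h' hx
          · exact absurd h' hy
      exact hT.IsAcyclic (c.transfer T hedges) (hc.transfer hedges)

lemma path_len {T : SimpleGraph V} (hT : T.IsTree) {u x : V} {p : T.Walk u x}
    (hp : p.IsPath) : p.length = T.dist u x := by
  obtain ⟨q, hq, hlen⟩ := hT.isConnected.exists_path_of_dist u x
  rw [ExistsUnique.unique (hT.existsUnique_path u x) hp hq, hlen]

/-- Every vertex `x ≠ u` in a tree has a "parent" `w` (toward the root `u`):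
`w` is adjacent to `x`, is one closer to `u`, lies on every `u`–`x` path, and all
other neighbors of `x` are one farther from `u`. -/
lemma parent_spec {T : SimpleGraph V} (hT : T.IsTree) {u x : V} (hux : u ≠ x) :
    ∃ w, T.Adj x w ∧ T.dist u w + 1 = T.dist u x ∧
      (∀ y, T.Adj x y → y ≠ w → T.dist u y = T.dist u x + 1) ∧
      (∀ (q : T.Walk u x), q.IsPath → w ∈ q.support) := by
  classical
  obtain ⟨p, hp, hpu⟩ := hT.existsUnique_path u x
  obtain ⟨w, h, pr, hrev⟩ := exists_eq_cons_of_ne (Ne.symm hux) p.reverse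
  have hprev : p.reverse.IsPath := hp.reverse
  rw [hrev, cons_isPath_iff] at hprev
  have hpr : pr.IsPath := hprev.1
  have hlenp : p.length = T.dist u x := path_len hT hp
  have hlenpr : pr.length + 1 = p.length := by
    have h1 := congrArg Walk.length hrev
    rw [length_reverse, length_cons] at h1
    omega
  have hdw : T.dist u w = pr.length := by
    have h2 : pr.reverse.IsPath := hpr.reverse
    have h3 := path_len hT h2
    rw [length_reverse] at h3
    exact h3.symm
  have hw_mem_p : w ∈ p.support := by
    have : w ∈ p.reverse.support := by
      rw [hrev, support_cons]
      exact List.mem_cons_of_mem _ pr.start_mem_support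
    rwa [support_reverse, List.mem_reverse] at this
  refine ⟨w, h, by omega, ?_, ?_⟩
  · intro y hy hyw
    have hymem : y ∉ p.support := by
      intro hmem
      apply hyw
      have h1 : (p.dropUntil y hmem).IsPath := hp.dropUntil hmem
      have h2 : (Walk.cons hy.symm Walk.nil : T.Walk y x).IsPath := by
        rw [cons_isPath_iff]
        refine ⟨IsPath.nil, ?_⟩
        rw [support_nil, List.mem_singleton]
        exact hy.ne'
      have heq := ExistsUnique.unique (hT.existsUnique_path y x) h1 h2
      have hspec := p.take_spec hmem
      rw [heq] at hspec
      have hpconcat : (p.takeUntil y hmem).concat hy.symm = p := by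
        rw [concat_eq_append]
        exact hspec
      have h4 := congrArg Walk.reverse hpconcat
      rw [reverse_concat, hrev] at h4
      have hsup := congrArg Walk.support h4
      rw [support_cons, support_cons, (p.takeUntil y hmem).reverse.support_eq_cons,
        pr.support_eq_cons] at hsup
      have := (List.cons.injEq _ _ _ _).mp hsup
      have := (List.cons.injEq _ _ _ _).mp this.2
      exact this.1
    have hconcat : (p.concat hy).IsPath := isPath_concat hp hy hymem
    have h5 := path_len hT hconcat
    rw [length_concat] at h5
    omega
  · intro q hq
    rw [hpu q hq]
    exact hw_mem_p


section Fin
variable [Fintype V]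

lemma two_le_ncard_nbrs {T : SimpleGraph V} {x w1 w2 : V} (h1 : T.Adj x w1)
    (h2 : T.Adj x w2) (hne : w1 ≠ w2) : 2 ≤ (T.neighborSet x).ncard := by
  have h12 : 1 < (T.neighborSet x).ncard :=
    (Set.one_lt_ncard (Set.toFinite _)).mpr ⟨w1, h1, w2, h2, hne⟩
  omega

lemma ncard_nbrs_le {T : SimpleGraph V} {x v1 v2 : V} (h1 : v1 ∉ T.neighborSet x)
    (h2 : v2 ∉ T.neighborSet x) (hne : v1 ≠ v2) :
    (T.neighborSet x).ncard ≤ Fintype.card V - 2 := by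
  classical
  have hsub : T.neighborSet x ⊆ (Set.univ \ {v1, v2}) := by
    intro y hy
    refine ⟨trivial, ?_⟩
    rintro (rfl | rfl)
    · exact h1 hy
    · exact h2 hy
  have hle := Set.ncard_le_ncard hsub (Set.toFinite _)
  have hcard : (Set.univ \ {v1, v2} : Set V).ncard = Fintype.card V - 2 := by
    rw [Set.ncard_diff (Set.subset_univ _), Set.ncard_univ, Set.ncard_pair hne,
      Nat.card_eq_fintype_card]
  omega

lemma exists_far_leaf {T : SimpleGraph V} (hT : T.IsTree) {u : V}
    (hx : ∃ x, x ≠ u ∧ ¬T.Adj u x) : ∃ b, IsLeaf T b ∧ b ≠ u ∧ ¬T.Adj u b := by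
  classical
  set S : Finset V := Finset.univ.filter (fun x => x ≠ u ∧ ¬T.Adj u x) with hSdef
  have hS : S.Nonempty := by
    obtain ⟨x, hx1, hx2⟩ := hx
    exact ⟨x, by simp [hSdef, hx1, hx2]⟩
  obtain ⟨x, hxS, hmax⟩ := S.exists_max_image (fun x => T.dist u x) hS
  have hxmem : x ≠ u ∧ ¬T.Adj u x := by simpa [hSdef] using hxS
  obtain ⟨w, hw, hdw, hchild, -⟩ := parent_spec hT (Ne.symm hxmem.1)
  refine ⟨x, ⟨w, hw, ?_⟩, hxmem.1, hxmem.2⟩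
  intro y hy
  by_contra hyw
  have hdy := hchild y hy hyw
  have hyu : y ≠ u := by
    rintro rfl
    rw [SimpleGraph.dist_self] at hdy
    omega
  have hyadj : ¬T.Adj u y := by
    intro hadj
    have h1 : T.dist u y = 1 := SimpleGraph.dist_eq_one_iff_adj.mpr hadj
    have h0 : T.dist u x = 0 := by omega
    exact hxmem.1 ((hT.isConnected.dist_eq_zero_iff.mp h0).symm)
  have hymem : y ∈ S := by simp [hSdef, hyu, hyadj]
  have := hmax y hymem
  omega

lemma nonleaf_nbr {T : SimpleGraph V} (hT : T.IsTree) {u x0 : V}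
    (hx : x0 ≠ u) (hnadj : ¬T.Adj u x0) : ∃ w, T.Adj u w ∧ ¬IsLeaf T w := by
  obtain ⟨p, hp, -⟩ := hT.existsUnique_path u x0
  obtain ⟨w, h, q, hq⟩ := exists_eq_cons_of_ne (Ne.symm hx) p
  have hwx : w ≠ x0 := by rintro rfl; exact hnadj h
  obtain ⟨w2, h2, q2, hq2⟩ := exists_eq_cons_of_ne hwx q
  refine ⟨w, h, ?_⟩
  rintro ⟨z, hz, hzu⟩
  have huw2 : u = w2 := (hzu u h.symm).trans (hzu w2 h2).symm
  rw [hq] at hp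
  rw [cons_isPath_iff] at hp
  apply hp.2
  rw [huw2, hq2, support_cons]
  exact List.mem_cons_of_mem _ q2.start_mem_support

lemma star_eq {T : SimpleGraph V} (hT : T.IsTree) {u : V}
    (hall : ∀ x, x ≠ u → T.Adj u x) : T = starG u := by
  ext x y
  constructor
  · intro hxy
    refine ⟨hxy.ne, ?_⟩
    by_contra hcon
    push_neg at hcon
    obtain ⟨hxu, hyu⟩ := hcon
    have h1 : (Walk.cons hxy Walk.nil : T.Walk x y).IsPath := by
      rw [cons_isPath_iff]
      exact ⟨IsPath.nil, by rw [support_nil, List.mem_singleton]; exact hxy.ne⟩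
    have h2 : (Walk.cons (hall x hxu).symm (Walk.cons (hall y hyu) Walk.nil) :
        T.Walk x y).IsPath := by
      rw [cons_isPath_iff, cons_isPath_iff]
      refine ⟨⟨IsPath.nil, ?_⟩, ?_⟩
      · rw [support_nil, List.mem_singleton]; exact fun h => hyu h.symm
      · rw [support_cons, support_nil]
        intro hmem
        rcases List.mem_cons.mp hmem with h | h
        · exact hxu h
        · rw [List.mem_singleton] at h; exact hxy.ne h
    have heq := ExistsUnique.unique (hT.existsUnique_path x y) h1 h2
    have := congrArg Walk.length heq
    simp at this
  · rintro ⟨hne, rfl | rfl⟩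
    · exact hall y (Ne.symm hne)
    · exact (hall x hne).symm

lemma exists_good_root {T : SimpleGraph V} (hT : T.IsTree) :
    ∃ u, (∀ x, x ≠ u → T.Adj u x) ∨
      (¬IsLeaf T u ∧ ∀ z w, T.Adj u z → T.Adj u w → ¬IsLeaf T z → ¬IsLeaf T w → z = w) := by
  classical
  obtain ⟨r⟩ := hT.isConnected.nonempty
  by_cases hall : ∀ x, IsLeaf T x
  · refine ⟨r, Or.inl ?_⟩
    intro x hx
    obtain ⟨p, hp, -⟩ := hT.existsUnique_path r x
    obtain ⟨v, h, q, hq⟩ := exists_eq_cons_of_ne (Ne.symm hx) p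
    by_cases hvx : v = x
    · rwa [hvx] at h
    · exfalso
      obtain ⟨v2, h2, q2, hq2⟩ := exists_eq_cons_of_ne hvx q
      have hrv2 : r = v2 := (leaf_eq (hall v) h.symm h2)
      rw [hq, cons_isPath_iff] at hp
      apply hp.2
      rw [hrv2, hq2, support_cons]
      exact List.mem_cons_of_mem _ q2.start_mem_support
  · push_neg at hall
    set S : Finset V := Finset.univ.filter (fun x => ¬IsLeaf T x) with hSdef
    have hS : S.Nonempty := by
      obtain ⟨x, hx⟩ := hall
      exact ⟨x, by simp [hSdef, hx]⟩
    obtain ⟨u, huS, hmax⟩ := S.exists_max_image (fun x => T.dist r x) hS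
    have hu : ¬IsLeaf T u := by simpa [hSdef] using huS
    refine ⟨u, Or.inr ⟨hu, ?_⟩⟩
    intro z w hz hw hznl hwnl
    -- any non-leaf neighbor y of u satisfies dist r y ≤ dist r u, hence equals the parent
    by_cases hru : r = u
    · exfalso
      subst hru
      have h1 : T.dist r z = 1 := SimpleGraph.dist_eq_one_iff_adj.mpr hz
      have h2 := hmax z (by simp [hSdef, hznl])
      rw [SimpleGraph.dist_self] at h2
      omega
    · obtain ⟨pw, hpw, hdpw, hchild, -⟩ := parent_spec hT hru
      have key : ∀ y, T.Adj u y → ¬IsLeaf T y → y = pw := by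
        intro y hy hynl
        by_contra hne
        have := hchild y hy hne
        have h2 := hmax y (by simp [hSdef, hynl])
        omega
      rw [key z hz hznl, key w hw hwnl]

lemma moveLeaf_to_u_adj {T : SimpleGraph V} {b u : V} (hbu : b ≠ u)
    (hbadj : ¬T.Adj u b) (x : V) :
    (moveLeaf T b u).Adj u x ↔ (T.Adj u x ∨ x = b) := by
  rw [moveLeaf_spec (Ne.symm hbu)]
  constructor
  · rintro (⟨h, -, -⟩ | ⟨h1, -⟩ | ⟨-, h2⟩)
    · exact Or.inl h
    · exact absurd h1.symm hbu
    · exact Or.inr h2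
  · rintro (h | rfl)
    · refine Or.inl ⟨h, ?_, ?_⟩
      · rintro rfl; exact hbu rfl
      · rintro rfl; exact hbadj h
    · exact Or.inr (Or.inr ⟨rfl, rfl⟩)

lemma moveLeaf_isLeaf_b {T : SimpleGraph V} {b a : V} (hab : a ≠ b) :
    IsLeaf (moveLeaf T b a) b := by
  refine ⟨a, (moveLeaf_spec hab b a).mpr (Or.inr (Or.inl ⟨rfl, rfl⟩)), ?_⟩
  intro y hy
  rcases (moveLeaf_spec hab b y).mp hy with ⟨-, hbb, -⟩ | ⟨-, h⟩ | ⟨h, -⟩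
  · exact absurd rfl hbb
  · exact h
  · exact absurd h.symm hab

lemma moveLeaf_isLeaf_keep {T : SimpleGraph V} {b a z c : V} (hab : a ≠ b)
    (hz : IsLeaf T z) (hzb : z ≠ b) (hza : z ≠ a) (hc : T.Adj z c) (hcb : c ≠ b) :
    IsLeaf (moveLeaf T b a) z := by
  refine ⟨c, (moveLeaf_spec hab z c).mpr (Or.inl ⟨hc, hzb, hcb⟩), ?_⟩
  intro y hy
  rcases (moveLeaf_spec hab z y).mp hy with ⟨h, -, -⟩ | ⟨h, -⟩ | ⟨h, -⟩
  · exact leaf_eq hz h hc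
  · exact absurd h hzb
  · exact absurd h hza

lemma reach_star_aux (u : V) :
    ∀ (k : ℕ) (T : SimpleGraph V), T.IsTree → ¬IsLeaf T u →
      (∀ z w, T.Adj u z → T.Adj u w → ¬IsLeaf T z → ¬IsLeaf T w → z = w) →
      {x | x ≠ u ∧ ¬T.Adj u x}.ncard ≤ k →
      Relation.ReflTransGen (fun A B => isStretch A B ∨ isExpand A B) T (starG u) := by
  intro k
  induction k with
  | zero =>
    intro T hT _ _ hcard
    have hall : ∀ x, x ≠ u → T.Adj u x := by
      intro x hx
      by_contra h
      have hpos : 0 < {x | x ≠ u ∧ ¬T.Adj u x}.ncard :=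
        (Set.ncard_pos (Set.toFinite _)).mpr ⟨x, hx, h⟩
      omega
    rw [star_eq hT hall]
  | succ k ih =>
    intro T hT hunl hinv hcard
    by_cases hS : ∃ x, x ≠ u ∧ ¬T.Adj u x
    · obtain ⟨b, hbleaf, hbu, hbadj⟩ := exists_far_leaf hT hS
      obtain ⟨x0, hx0u, hx0adj⟩ := hS
      obtain ⟨w, hwadj, hwnl⟩ := nonleaf_nbr hT hx0u hx0adj
      set T2 := moveLeaf T b u with hT2def
      have hub : u ≠ b := Ne.symm hbu
      have hT2 : T2.IsTree := moveLeaf_isTree hT hbleaf hub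
      have hwb : w ≠ b := by rintro rfl; exact hbadj hwadj
      have hT2adju : ∀ x, T2.Adj u x ↔ (T.Adj u x ∨ x = b) :=
        moveLeaf_to_u_adj hbu hbadj
      have hbleaf2 : IsLeaf T2 b := moveLeaf_isLeaf_b hub
      have hstep : isExpand T T2 := by
        refine ⟨u, b, w, hwadj, hwnl, ?_, ?_, ?_, hbleaf, hbu, hbadj,
          fun x y => moveLeaf_spec hub x y⟩
        · intro z hz hzw
          by_contra hznl
          exact hzw (hinv z w hz hwadj hznl hwnl)
        · obtain ⟨z2, hz2, hz2w⟩ := exists_second_nbr hunl hwadj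
          exact two_le_ncard_nbrs hz2 hwadj hz2w
        · exact ncard_nbrs_le (fun h => T.irrefl h) hbadj hub
      have hkeep : ∀ z, T.Adj u z → IsLeaf T z → IsLeaf T2 z := by
        intro z hz hzl
        refine moveLeaf_isLeaf_keep hub hzl ?_ ?_ hz.symm hub
        · rintro rfl; exact hbadj hz
        · rintro rfl; exact T.irrefl hz
      refine Relation.ReflTransGen.head (Or.inr hstep) (ih T2 hT2 ?_ ?_ ?_)
      · exact not_isLeaf_of_two ((hT2adju w).mpr (Or.inl hwadj))
          ((hT2adju b).mpr (Or.inr rfl)) hwb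
      · intro z z' hz hz' hznl hz'nl
        have hz1 : T.Adj u z := by
          rcases (hT2adju z).mp hz with h | rfl
          · exact h
          · exact absurd hbleaf2 hznl
        have hz'1 : T.Adj u z' := by
          rcases (hT2adju z').mp hz' with h | rfl
          · exact h
          · exact absurd hbleaf2 hz'nl
        refine hinv z z' hz1 hz'1 ?_ ?_
        · intro hl; exact hznl (hkeep z hz1 hl)
        · intro hl; exact hz'nl (hkeep z' hz'1 hl)
      · have hset : {x | x ≠ u ∧ ¬T2.Adj u x} = {x | x ≠ u ∧ ¬T.Adj u x} \ {b} := by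
          ext x
          simp only [Set.mem_setOf_eq, Set.mem_diff, Set.mem_singleton_iff, hT2adju x]
          tauto
        have hmem : b ∈ {x | x ≠ u ∧ ¬T.Adj u x} := ⟨hbu, hbadj⟩
        have h1 : ({x | x ≠ u ∧ ¬T.Adj u x} \ {b}).ncard =
            {x | x ≠ u ∧ ¬T.Adj u x}.ncard - 1 :=
          Set.ncard_diff_singleton_of_mem hmem
        have h2 : 0 < {x | x ≠ u ∧ ¬T.Adj u x}.ncard :=
          (Set.ncard_pos (Set.toFinite _)).mpr ⟨b, hmem⟩
        rw [hset, h1]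
        omega
    · push_neg at hS
      rw [star_eq hT hS]

lemma reach_star (T : SimpleGraph V) (hT : T.IsTree) :
    ∃ u, Relation.ReflTransGen (fun A B => isStretch A B ∨ isExpand A B) T (starG u) := by
  obtain ⟨u, hu | hu⟩ := exists_good_root hT
  · exact ⟨u, by rw [star_eq hT hu]⟩
  · exact ⟨u, reach_star_aux u _ T hT hu.1 hu.2 le_rfl⟩

end Fin


section Build
variable [Fintype V]

lemma moveLeaf_self {G : SimpleGraph V} {b a : V} (h : ∀ y, G.Adj b y ↔ y = a) :
    moveLeaf G b a = G := by
  have hab : a ≠ b := by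
    intro hh
    exact G.irrefl ((h b).mpr hh.symm)
  ext x y
  rw [moveLeaf_spec hab]
  constructor
  · rintro (⟨h1, -, -⟩ | ⟨hx, hy⟩ | ⟨hx, hy⟩)
    · exact h1
    · rw [hx, hy]; exact (h a).mpr rfl
    · rw [hx, hy]; exact ((h a).mpr rfl).symm
  · intro hxy
    by_cases hx : x = b
    · subst hx
      exact Or.inr (Or.inl ⟨rfl, (h y).mp hxy⟩)
    · by_cases hy : y = b
      · subst hy
        exact Or.inr (Or.inr ⟨(h x).mp hxy.symm, rfl⟩)
      · exact Or.inl ⟨hxy, hx, hy⟩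

/-- The intermediate graphs: the part of `T` induced on `A`, with all vertices
outside `A` attached to `u` as pending leaves. -/
def buildG (T : SimpleGraph V) (u : V) (A : Set V) : SimpleGraph V where
  Adj x y := x ≠ y ∧ ((T.Adj x y ∧ x ∈ A ∧ y ∈ A) ∨ (x ∉ A ∧ y = u) ∨ (y ∉ A ∧ x = u))
  symm := by
    constructor
    rintro x y ⟨h1, h2⟩
    refine ⟨h1.symm, ?_⟩
    rcases h2 with ⟨h, hx, hy⟩ | ⟨hx, hy⟩ | ⟨hx, hy⟩
    · exact Or.inl ⟨h.symm, hy, hx⟩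
    · exact Or.inr (Or.inr ⟨hx, hy⟩)
    · exact Or.inr (Or.inl ⟨hx, hy⟩)
  loopless := ⟨fun x h => h.1 rfl⟩

lemma buildG_univ (T : SimpleGraph V) (u : V) : buildG T u Set.univ = T := by
  ext x y
  constructor
  · rintro ⟨h1, ⟨h, -, -⟩ | ⟨h, -⟩ | ⟨h, -⟩⟩
    · exact h
    · exact absurd (Set.mem_univ x) h
    · exact absurd (Set.mem_univ y) h
  · intro h
    exact ⟨h.ne, Or.inl ⟨h, Set.mem_univ x, Set.mem_univ y⟩⟩

lemma buildG_singleton (T : SimpleGraph V) (u : V) : buildG T u {u} = starG u := by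
  ext x y
  constructor
  · rintro ⟨h1, ⟨h, hx, hy⟩ | ⟨-, hy⟩ | ⟨-, hx⟩⟩
    · rw [Set.mem_singleton_iff] at hx hy
      exact absurd (hx.trans hy.symm) h1
    · exact ⟨h1, Or.inr hy⟩
    · exact ⟨h1, Or.inl hx⟩
  · rintro ⟨h1, rfl | rfl⟩
    · refine ⟨h1, Or.inr (Or.inr ⟨?_, rfl⟩)⟩
      rw [Set.mem_singleton_iff]
      exact h1.symm
    · refine ⟨h1, Or.inr (Or.inl ⟨?_, rfl⟩)⟩
      rw [Set.mem_singleton_iff]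
      exact h1

lemma reach_build (T : SimpleGraph V) (hT : T.IsTree) (u : V) :
    ∀ (k : ℕ) (A : Set V),
      (u ∈ A ∧ ∀ x ∈ A, ∀ (p : T.Walk u x), p.IsPath → ∀ z ∈ p.support, z ∈ A) →
      A.ncard ≤ k →
      Relation.ReflTransGen (fun A B => isStretch A B ∨ isExpand A B)
        (starG u) (buildG T u A) := by
  classical
  intro k
  induction k with
  | zero =>
    intro A hA hcard
    exfalso
    have : 0 < A.ncard := (Set.ncard_pos (Set.toFinite _)).mpr ⟨u, hA.1⟩
    omega
  | succ k ih =>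
    intro A hA hcard
    by_cases hA1 : ∃ x, x ∈ A ∧ x ≠ u
    · set S : Finset V := Finset.univ.filter (fun x => x ∈ A ∧ x ≠ u) with hSdef
      have hS : S.Nonempty := by
        obtain ⟨x, hx1, hx2⟩ := hA1
        exact ⟨x, by simp [hSdef, hx1, hx2]⟩
      obtain ⟨xb, hxbS, hmaxS⟩ := S.exists_max_image (fun x => T.dist u x) hS
      have hxb : xb ∈ A ∧ xb ≠ u := by simpa [hSdef] using hxbS
      have hmax' : ∀ y, y ∈ A → y ≠ u → T.dist u y ≤ T.dist u xb := by
        intro y h1 h2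
        have := hmaxS y (by simp [hSdef, h1, h2])
        simpa using this
      obtain ⟨w, hw, hdw, hchild, hwmem⟩ := parent_spec hT (Ne.symm hxb.2)
      obtain ⟨p, hp, -⟩ := hT.existsUnique_path u xb
      have hwA : w ∈ A := hA.2 xb hxb.1 p hp w (hwmem p hp)
      have hwxb : w ≠ xb := fun h => T.irrefl (h ▸ hw)
      have hdxb_pos : 0 < T.dist u xb := hT.isConnected.pos_dist_of_ne (Ne.symm hxb.2)
      have hfacta : ∀ y, y ∈ A → T.Adj xb y → y = w := by
        intro y hyA hy
        by_contra hne
        have h1 := hchild y hy hne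
        have hyu : y ≠ u := by
          rintro rfl
          rw [SimpleGraph.dist_self] at h1
          omega
        have := hmax' y hyA hyu
        omega
      set A' := A \ {xb} with hA'def
      have huA' : u ∈ A' := ⟨hA.1, fun h => hxb.2 (Set.mem_singleton_iff.mp h).symm⟩
      have hclosed' : u ∈ A' ∧ ∀ x ∈ A', ∀ (q : T.Walk u x), q.IsPath →
          ∀ z ∈ q.support, z ∈ A' := by
        refine ⟨huA', ?_⟩
        intro x hx q hq z hz
        refine ⟨hA.2 x hx.1 q hq z hz, ?_⟩
        rw [Set.mem_singleton_iff]
        rintro rfl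
        by_cases hxu : x = u
        · subst hxu
          rw [(Walk.isPath_iff_eq_nil (p := q)).mp hq, support_nil, List.mem_singleton] at hz
          exact hxb.2 hz
        · have hql : q.length = T.dist u x := path_len hT hq
          have htake : (q.takeUntil z hz).length = T.dist u z := path_len hT (hq.takeUntil hz)
          have hsplit := congrArg Walk.length (q.take_spec hz)
          rw [length_append] at hsplit
          have hdropne : (q.dropUntil z hz).length ≠ 0 := by
            intro h0
            exact (Set.mem_singleton_iff.not.mp hx.2) (Walk.eq_of_length_eq_zero h0).symm
          have := hmax' x hx.1 hxu
          omega
      have hcard' : A'.ncard ≤ k := by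
        have hd := Set.ncard_diff_singleton_of_mem hxb.1
        rw [hA'def, hd]
        omega
      have hreach' := ih A' hclosed' hcard'
      have hGxb : ∀ y, (buildG T u A).Adj xb y ↔ y = w := by
        intro y
        constructor
        · rintro ⟨h1, ⟨h, -, hy⟩ | ⟨hx, -⟩ | ⟨-, hx⟩⟩
          · exact hfacta y hy h
          · exact absurd hxb.1 hx
          · exact absurd hx hxb.2
        · rintro rfl
          exact ⟨Ne.symm hwxb, Or.inl ⟨hw, hxb.1, hwA⟩⟩
      have hG'xb : ∀ y, (buildG T u A').Adj xb y ↔ y = u := by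
        intro y
        constructor
        · rintro ⟨h1, ⟨-, hx, -⟩ | ⟨-, hy⟩ | ⟨-, hx⟩⟩
          · exact absurd rfl (Set.mem_singleton_iff.not.mp hx.2)
          · exact hy
          · exact absurd hx hxb.2
        · rintro rfl
          refine ⟨hxb.2, Or.inr (Or.inl ⟨?_, rfl⟩)⟩
          intro hmem
          exact (Set.mem_singleton_iff.not.mp hmem.2) rfl
      have hsame : ∀ x y, x ≠ xb → y ≠ xb →
          ((buildG T u A).Adj x y ↔ (buildG T u A').Adj x y) := by
        intro x y hx hy
        constructor
        · rintro ⟨h1, ⟨h, hxA, hyA⟩ | ⟨hxA, hyu⟩ | ⟨hyA, hxu⟩⟩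
          · exact ⟨h1, Or.inl ⟨h, ⟨hxA, Set.mem_singleton_iff.not.mpr hx⟩,
              ⟨hyA, Set.mem_singleton_iff.not.mpr hy⟩⟩⟩
          · exact ⟨h1, Or.inr (Or.inl ⟨fun hmem => hxA hmem.1, hyu⟩)⟩
          · exact ⟨h1, Or.inr (Or.inr ⟨fun hmem => hyA hmem.1, hxu⟩)⟩
        · rintro ⟨h1, ⟨h, hxA, hyA⟩ | ⟨hxA, hyu⟩ | ⟨hyA, hxu⟩⟩
          · exact ⟨h1, Or.inl ⟨h, hxA.1, hyA.1⟩⟩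
          · exact ⟨h1, Or.inr (Or.inl
              ⟨fun hmem => hxA ⟨hmem, Set.mem_singleton_iff.not.mpr hx⟩, hyu⟩)⟩
          · exact ⟨h1, Or.inr (Or.inr
              ⟨fun hmem => hyA ⟨hmem, Set.mem_singleton_iff.not.mpr hy⟩, hxu⟩)⟩
      have hkey : buildG T u A = moveLeaf (buildG T u A') xb w := by
        ext x y
        rw [moveLeaf_spec hwxb]
        by_cases hx : x = xb
        · subst hx
          rw [hGxb y]
          constructor
          · intro h
            exact Or.inr (Or.inl ⟨rfl, h⟩)
          · rintro (⟨-, hxx, -⟩ | ⟨-, h⟩ | ⟨h, -⟩)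
            · exact absurd rfl hxx
            · exact h
            · exact absurd h.symm hwxb
        · by_cases hy : y = xb
          · constructor
            · intro h
              have hxw : x = w := (hGxb x).mp (hy ▸ h.symm)
              exact Or.inr (Or.inr ⟨hxw, hy⟩)
            · rintro (⟨-, -, hxx⟩ | ⟨h, -⟩ | ⟨hxw, -⟩)
              · exact absurd hy hxx
              · exact absurd h hx
              · rw [hxw, hy]
                exact ((hGxb w).mpr rfl).symm
          · rw [hsame x y hx hy]
            constructor
            · intro h
              exact Or.inl ⟨h, hx, hy⟩
            · rintro (⟨h, -, -⟩ | ⟨h, -⟩ | ⟨-, h⟩)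
              · exact h
              · exact absurd h hx
              · exact absurd h hy
      by_cases hwu : w = u
      · subst hwu
        rw [hkey, moveLeaf_self hG'xb]
        exact hreach'
      · have hwu' : u ≠ w := Ne.symm hwu
        have hxbleaf : IsLeaf (buildG T u A') xb :=
          ⟨u, (hG'xb u).mpr rfl, fun y hy => (hG'xb y).mp hy⟩
        by_cases hwleaf : IsLeaf (buildG T u A') w
        · -- stretch
          refine hreach'.tail (Or.inl ⟨w, xb, hwxb, hwleaf, hxbleaf, ?_⟩)
          intro x y
          rw [hkey, moveLeaf_spec hwxb]
        · -- expand
          obtain ⟨v, hv, hdv, hchildw, hvmem⟩ := parent_spec hT hwu'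
          obtain ⟨pw, hpw, -⟩ := hT.existsUnique_path u w
          have hvA : v ∈ A := hA.2 w hwA pw hpw v (hvmem pw hpw)
          have hvxb : v ≠ xb := by
            rintro rfl
            omega
          have hvA' : v ∈ A' := ⟨hvA, Set.mem_singleton_iff.not.mpr hvxb⟩
          have hwA' : w ∈ A' := ⟨hwA, Set.mem_singleton_iff.not.mpr hwxb⟩
          have hG'wv : (buildG T u A').Adj w v := ⟨hv.ne, Or.inl ⟨hv, hwA', hvA'⟩⟩
          have hdeep : ∀ z, z ∈ A' → T.Adj w z → z ≠ v →
              IsLeaf (buildG T u A') z := by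
            intro z hz hwz hzv
            have hdz : T.dist u z = T.dist u xb := by
              have := hchildw z hwz hzv
              omega
            have hzu : z ≠ u := by
              rintro rfl
              rw [SimpleGraph.dist_self] at hdz
              omega
            obtain ⟨w', hw', hdw', hchz, -⟩ := parent_spec hT (Ne.symm hzu)
            have hww' : w = w' := by
              by_contra hne
              have := hchz w hwz.symm hne
              omega
            refine ⟨w, ⟨fun h => T.irrefl (h ▸ hwz), Or.inl ⟨hwz.symm, hz, hwA'⟩⟩, ?_⟩
            intro y hy
            rcases hy with ⟨h1, ⟨h, -, hyB⟩ | ⟨hzA, -⟩ | ⟨-, hzu'⟩⟩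
            · by_contra hyw
              have hrw : y ≠ w' := fun hh => hyw (hh.trans hww'.symm)
              have hstep := hchz y h hrw
              have hyu : y ≠ u := by
                rintro rfl
                rw [SimpleGraph.dist_self] at hstep
                omega
              have := hmax' y hyB.1 hyu
              omega
            · exact absurd hz hzA
            · exact absurd hzu' hzu
          obtain ⟨z2, hz2, hz2v⟩ := exists_second_nbr hwleaf hG'wv
          have hG'uxb : (buildG T u A').Adj u xb := ((hG'xb u).mpr rfl).symm
          have hvnl : ¬IsLeaf (buildG T u A') v := by
            by_cases hvu : v = u
            · subst hvu
              exact not_isLeaf_of_two hG'uxb hG'wv.symm (Ne.symm hwxb)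
            · obtain ⟨v', hv', hdv', -, hv'mem⟩ := parent_spec hT (Ne.symm hvu)
              obtain ⟨pv, hpv, -⟩ := hT.existsUnique_path u v
              have hv'A : v' ∈ A := hA.2 v hvA pv hpv v' (hv'mem pv hpv)
              have hv'xb : v' ≠ xb := by
                rintro rfl
                omega
              have hG'vv' : (buildG T u A').Adj v v' :=
                ⟨hv'.ne, Or.inl ⟨hv', hvA', ⟨hv'A, Set.mem_singleton_iff.not.mpr hv'xb⟩⟩⟩
              have hwv' : w ≠ v' := by
                rintro rfl
                omega
              exact not_isLeaf_of_two hG'wv.symm hG'vv' hwv'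
          have hnadj : ¬(buildG T u A').Adj w xb := by
            intro h
            exact hwu ((hG'xb w).mp h.symm)
          refine hreach'.tail (Or.inr ⟨w, xb, v, hG'wv, hvnl, ?_, ?_, ?_, hxbleaf,
            Ne.symm hwxb, hnadj, ?_⟩)
          · intro z hz hzv
            rcases hz with ⟨h1, ⟨h, -, hzA2⟩ | ⟨hwA2, -⟩ | ⟨hzA2, hwu2⟩⟩
            · exact hdeep z hzA2 h hzv
            · exact absurd hwA' hwA2
            · exact absurd hwu2 hwu
          · exact two_le_ncard_nbrs hz2 hG'wv hz2v
          · exact ncard_nbrs_le (fun h => (buildG T u A').irrefl h) hnadj hwxb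
          · intro x y
            rw [hkey, moveLeaf_spec hwxb]
    · push_neg at hA1
      have hAeq : A = {u} := Set.eq_singleton_iff_unique_mem.mpr ⟨hA.1, hA1⟩
      rw [hAeq, buildG_singleton]

end Build

end Stmt7Aux

/-- Any tree on `n` vertices can be obtained (up to isomorphism) from any other tree
on `n` vertices by a finite sequence of Stretching and Expanding operations. -/
theorem stmt_7 (n : ℕ) (T T' : SimpleGraph (Fin n)) (hT : T.IsTree) (hT' : T'.IsTree) :
    ∃ T'' : SimpleGraph (Fin n),
      Relation.ReflTransGen (fun A B => isStretch A B ∨ isExpand A B) T T'' ∧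
      Nonempty (T'' ≃g T') := by
  obtain ⟨u, h1⟩ := Stmt7Aux.reach_star T hT
  have h2 := Stmt7Aux.reach_build T' hT' u (Fintype.card (Fin n)) Set.univ
    ⟨Set.mem_univ u, fun z _ p _ w _ => Set.mem_univ w⟩
    (by rw [Set.ncard_univ, Nat.card_eq_fintype_card])
  rw [Stmt7Aux.buildG_univ] at h2
  exact ⟨T', h1.trans h2, ⟨SimpleGraph.Iso.refl⟩⟩
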